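/- Let c > 0 and n ≥ 1 a natural number, and define f : ℝ → ℝ by f(x) = exp(−(nπ/c)·arctan(sinh x)). Then f is twice differentiable and satisfies, for every x ∈ ℝ: −f''(x) − tanh(x)·f'(x) + ((nπ/c)²/cosh²x)·f(x) = 0. -/

import Mathlib

open Real

lemma aux_hd1 (a : ℝ) (x : ℝ) :
    HasDerivAt (fun x : ℝ => Real.exp (-a * Real.arctan (Real.sinh x)))
      (-a / Real.cosh x * Real.exp (-a * Real.arctan (Real.sinh x))) x := by
  have hs : HasDerivAt Real.sinh (Real.cosh x) x := Real.hasDerivAt_sinh x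
  have ha : HasDerivAt Real.arctan (1 / (1 + Real.sinh x ^ 2)) (Real.sinh x) :=
    Real.hasDerivAt_arctan (Real.sinh x)
  have h1 : HasDerivAt (fun x : ℝ => -a * Real.arctan (Real.sinh x))
      (-a * (1 / (1 + Real.sinh x ^ 2) * Real.cosh x)) x :=
    ((ha.comp x hs)).const_mul (-a)
  have h2 := h1.exp
  convert h2 using 1
  have hc : Real.cosh x ≠ 0 := (Real.cosh_pos x).ne'
  have hsq : 1 + Real.sinh x ^ 2 = Real.cosh x ^ 2 := by
    have := Real.cosh_sq_sub_sinh_sq x; nlinarith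
  rw [hsq]
  field_simp

/-- f(x) = exp(−(nπ/c)·arctan(sinh x)) is twice differentiable and
solves the transverse ODE −f'' − tanh(x)f' + ((nπ/c)²/cosh²x)f = 0 of the K = −1
curved operator. -/
theorem stmt_14 (c : ℝ) (hc : 0 < c) (n : ℕ) (hn : 1 ≤ n)
    (f : ℝ → ℝ)
    (hf : f = fun x : ℝ => Real.exp (-((n : ℝ) * π / c) * Real.arctan (Real.sinh x))) :
    Differentiable ℝ f ∧ Differentiable ℝ (deriv f) ∧
    (∀ x : ℝ,
      -(deriv (deriv f) x) - Real.tanh x * deriv f x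
          + (((n : ℝ) * π / c) ^ 2 / (Real.cosh x) ^ 2) * f x = 0) := by
  set a : ℝ := (n : ℝ) * π / c with ha
  have hd1 : ∀ x, HasDerivAt f (-a / Real.cosh x * f x) x := by
    intro x; rw [hf]; exact aux_hd1 a x
  have hderiv : deriv f = fun x => -a / Real.cosh x * f x := by
    funext x; exact (hd1 x).deriv
  have hd2 : ∀ x, HasDerivAt (deriv f)
      (a * Real.sinh x / Real.cosh x ^ 2 * f x +
        (-a / Real.cosh x) * (-a / Real.cosh x * f x)) x := by
    intro x
    rw [hderiv]
    have hcx : Real.cosh x ≠ 0 := (Real.cosh_pos x).ne'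
    have hg : HasDerivAt (fun x : ℝ => -a / Real.cosh x)
        (a * Real.sinh x / Real.cosh x ^ 2) x := by
      have h := ((Real.hasDerivAt_cosh x).inv hcx).const_mul (-a)
      have heq : (fun x : ℝ => -a / Real.cosh x) = fun x => -a * (Real.cosh x)⁻¹ := by
        funext y; rw [div_eq_mul_inv]
      rw [heq]
      refine h.congr_deriv ?_
      ring
    exact hg.mul (hd1 x)
  refine ⟨fun x => (hd1 x).differentiableAt, fun x => (hd2 x).differentiableAt, ?_⟩
  intro x
  rw [(hd2 x).deriv, hderiv]
  have hcx : Real.cosh x ≠ 0 := (Real.cosh_pos x).ne'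
  rw [Real.tanh_eq_sinh_div_cosh]
  field_simp
  ring
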